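/- In the noisy non-adaptive group testing model with the column statistic T(·) built with constant ψ ≥ 0, for every non-defective item j ∉ S_d the variance of T(j) is at most M·p·(Γ + ψ²·(1−Γ)), and for every defective item i ∈ S_d the variance of T(i) is at most M·p·(γ0·Γ + ψ²·(1−γ0·Γ)). -/

import Mathlib

open MeasureTheory ProbabilityTheory

structure GTModel (Ω : Type) [MeasureSpace Ω] (M N : ℕ) (p u q : ℝ) where
  X : Fin M → Fin N → Ω → Bool
  d : Fin N → Fin M → Ω → Bool
  w : Fin M → Ω → Bool
  measX : ∀ l i, Measurable (X l i)
  measd : ∀ i l, Measurable (d i l)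
  measw : ∀ l, Measurable (w l)
  indep : iIndepFun
      (fun t : (Fin M × Fin N) ⊕ ((Fin N × Fin M) ⊕ Fin M) =>
        Sum.elim (fun li => X li.1 li.2)
          (Sum.elim (fun il => d il.1 il.2) (fun l => w l)) t)
      (ℙ : Measure Ω)
  probX : ∀ l i, (ℙ : Measure Ω) {ω | X l i ω = true} = ENNReal.ofReal p
  probd : ∀ i l, (ℙ : Measure Ω) {ω | d i l ω = true} = ENNReal.ofReal (1 - u)
  probw : ∀ l, (ℙ : Measure Ω) {ω | w l ω = true} = ENNReal.ofReal q

noncomputable def GTModel.Y {Ω : Type} [MeasureSpace Ω] {M N : ℕ} {p u q : ℝ}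
    (G : GTModel Ω M N p u q) (Sd : Finset (Fin N)) (l : Fin M) (ω : Ω) : Bool :=
  (Sd.sup fun i => G.d i l ω && G.X l i ω) || G.w l ω
/-- Column statistic: `T(i) = Σ_l X_{li}(1−Y_l) − ψ Σ_l X_{li} Y_l`. -/
noncomputable def GTModel.T {Ω : Type} [MeasureSpace Ω] {M N : ℕ} {p u q : ℝ}
    (G : GTModel Ω M N p u q) (Sd : Finset (Fin N)) (ψ : ℝ) (i : Fin N) (ω : Ω) : ℝ :=
  (∑ l : Fin M, (if G.X l i ω then (1 : ℝ) else 0) * (if G.Y Sd l ω then 0 else 1))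
    - ψ * ∑ l : Fin M, (if G.X l i ω then (1 : ℝ) else 0) * (if G.Y Sd l ω then 1 else 0)

set_option linter.unusedSectionVars false

section Aux
set_option linter.unusedSectionVars false
variable {Ω : Type} [MeasureSpace Ω] [IsProbabilityMeasure (ℙ : Measure Ω)]
variable {M N : ℕ} {p u q : ℝ}

abbrev GTIdx (M N : ℕ) := (Fin M × Fin N) ⊕ ((Fin N × Fin M) ⊕ Fin M)

variable (G : GTModel Ω M N p u q)

def Fam : GTIdx M N → Ω → Bool := fun t =>
  Sum.elim (fun li => G.X li.1 li.2)
    (Sum.elim (fun il => G.d il.1 il.2) (fun l => G.w l)) t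

lemma measFam : ∀ t, Measurable (Fam G t) := by
  rintro (⟨l,i⟩|⟨⟨i,l⟩|l⟩)
  · exact G.measX l i
  · exact G.measd i l
  · exact G.measw l

/-- `A` is determined by the coordinates in `S`. -/
def Det (S : Finset (GTIdx M N)) (A : Set Ω) : Prop :=
  ∀ ω ω', (∀ t ∈ S, Fam G t ω = Fam G t ω') → (ω ∈ A ↔ ω' ∈ A)

lemma Det.mono {S T : Finset (GTIdx M N)} {A : Set Ω} (hST : S ⊆ T) (h : Det G S A) :
    Det G T A := fun ω ω' hc => h ω ω' (fun t ht => hc t (hST ht))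

lemma Det.inter {S : Finset (GTIdx M N)} {A B : Set Ω} (hA : Det G S A) (hB : Det G S B) :
    Det G S (A ∩ B) := fun ω ω' hc => by
  simp only [Set.mem_inter_iff, hA ω ω' hc, hB ω ω' hc]

lemma Det.biInter {S : Finset (GTIdx M N)} {ι' : Type*} {s : Finset ι'} {A : ι' → Set Ω}
    (hA : ∀ i ∈ s, Det G S (A i)) : Det G S (⋂ i ∈ s, A i) := fun ω ω' hc => by
  simp only [Set.mem_iInter]
  exact ⟨fun h i hi => ((hA i hi) ω ω' hc).1 (h i hi), fun h i hi => ((hA i hi) ω ω' hc).2 (h i hi)⟩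

lemma L1 {S T : Finset (GTIdx M N)} {A E : Set Ω} (hA : Det G S A) (hE : Det G T E)
    (hST : Disjoint S T) : (ℙ : Measure Ω) (A ∩ E) = ℙ A * ℙ E := by
  classical
  set fS : Ω → (↥S → Bool) := fun ω t => Fam G t ω with hfS
  set fT : Ω → (↥T → Bool) := fun ω t => Fam G t ω with hfT
  have hIndep : IndepFun fS fT ℙ :=
    G.indep.indepFun_finset S T hST (measFam G)
  have hAeq : A = fS ⁻¹' (fS '' A) := by
    ext ω
    constructor
    · exact fun h => Set.mem_preimage.2 ⟨ω, h, rfl⟩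
    · rintro ⟨ω', hω', hfeq⟩
      exact (hA ω' ω (fun t ht => congrFun hfeq ⟨t, ht⟩)).1 hω'
  have hEeq : E = fT ⁻¹' (fT '' E) := by
    ext ω
    constructor
    · exact fun h => Set.mem_preimage.2 ⟨ω, h, rfl⟩
    · rintro ⟨ω', hω', hfeq⟩
      exact (hE ω' ω (fun t ht => congrFun hfeq ⟨t, ht⟩)).1 hω'
  have := hIndep.measure_inter_preimage_eq_mul (fS '' A) (fT '' E)
    ((Set.to_countable _).measurableSet) ((Set.to_countable _).measurableSet)
  rw [hAeq, hEeq]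
  exact this

lemma L2 {S0 : Finset (GTIdx M N)} {E : Set Ω} (hE : Det G S0 E)
    {B : Fin N → Finset (GTIdx M N)} {A : Fin N → Set Ω}
    (s : Finset (Fin N))
    (hA : ∀ i ∈ s, Det G (B i) (A i))
    (hdisj : ∀ i ∈ s, Disjoint (B i) S0)
    (hpair : (↑s : Set (Fin N)).Pairwise (fun a b => Disjoint (B a) (B b))) :
    (ℙ : Measure Ω) (E ∩ ⋂ i ∈ s, A i) = ℙ E * ∏ i ∈ s, ℙ (A i) := by
  classical
  induction s using Finset.induction_on with
  | empty => simp
  | @insert a s ha IH =>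
    have haS : a ∈ insert a s := Finset.mem_insert_self a s
    have hsub : ∀ i ∈ s, i ∈ insert a s := fun i hi => Finset.mem_insert_of_mem hi
    have hset : E ∩ ⋂ i ∈ insert a s, A i = A a ∩ (E ∩ ⋂ i ∈ s, A i) := by
      rw [Finset.set_biInter_insert]
      ext ω; simp only [Set.mem_inter_iff]; tauto
    rw [hset]
    have hrest : Det G (S0 ∪ s.biUnion B) (E ∩ ⋂ i ∈ s, A i) :=
      Det.inter G (hE.mono G Finset.subset_union_left)
        (Det.biInter G (fun i hi => (hA i (hsub i hi)).mono G
          ((Finset.subset_biUnion_of_mem B hi).trans Finset.subset_union_right)))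
    have hd : Disjoint (B a) (S0 ∪ s.biUnion B) := by
      rw [Finset.disjoint_union_right]
      refine ⟨hdisj a haS, ?_⟩
      rw [Finset.disjoint_biUnion_right]
      intro i hi
      exact hpair (by simp) (by simp [hi]) (fun h => ha (h ▸ hi))
    have h1 : (ℙ : Measure Ω) (A a ∩ (E ∩ ⋂ i ∈ s, A i))
        = ℙ (A a) * ℙ (E ∩ ⋂ i ∈ s, A i) :=
      L1 G (hA a haS) hrest hd
    rw [h1, IH (fun i hi => hA i (hsub i hi)) (fun i hi => hdisj i (hsub i hi))
      (hpair.mono (by simp [Finset.coe_subset, Finset.subset_insert]))]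
    rw [Finset.prod_insert ha]
    ring

variable (Sd : Finset (Fin N))

def blockA (l : Fin M) (i' : Fin N) : Finset (GTIdx M N) :=
  {Sum.inl (l, i'), Sum.inr (Sum.inl (i', l))}

def setA (l : Fin M) (i' : Fin N) : Set Ω :=
  {ω | (G.d i' l ω && G.X l i' ω) = false}

lemma detA (l : Fin M) (i' : Fin N) : Det G (blockA l i') (setA G l i') := by
  intro ω ω' hc
  have h1 := hc (Sum.inl (l, i')) (by simp [blockA])
  have h2 := hc (Sum.inr (Sum.inl (i', l))) (by simp [blockA])
  simp only [Fam, Sum.elim_inl, Sum.elim_inr] at h1 h2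
  simp only [setA, Set.mem_setOf_eq, h1, h2]

lemma detX (l : Fin M) (i' : Fin N) (b : Bool) :
    Det G {Sum.inl (l, i')} {ω | G.X l i' ω = b} := by
  intro ω ω' hc
  have h1 := hc (Sum.inl (l, i')) (by simp)
  simp only [Fam, Sum.elim_inl] at h1
  simp only [Set.mem_setOf_eq, h1]

lemma detd (l : Fin M) (i' : Fin N) (b : Bool) :
    Det G {Sum.inr (Sum.inl (i', l))} {ω | G.d i' l ω = b} := by
  intro ω ω' hc
  have h1 := hc (Sum.inr (Sum.inl (i', l))) (by simp)
  simp only [Fam, Sum.elim_inl, Sum.elim_inr] at h1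
  simp only [Set.mem_setOf_eq, h1]

lemma detw (l : Fin M) (b : Bool) :
    Det G {Sum.inr (Sum.inr l)} {ω | G.w l ω = b} := by
  intro ω ω' hc
  have h1 := hc (Sum.inr (Sum.inr l)) (by simp)
  simp only [Fam, Sum.elim_inl, Sum.elim_inr] at h1
  simp only [Set.mem_setOf_eq, h1]

lemma measSetB {f : Ω → Bool} (hf : Measurable f) (b : Bool) :
    MeasurableSet {ω | f ω = b} := hf (measurableSet_singleton b)

lemma ennreal_one_sub {x : ℝ} (hx0 : 0 ≤ x) :
    (1 : ENNReal) - ENNReal.ofReal x = ENNReal.ofReal (1 - x) := by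
  rw [ENNReal.ofReal_sub 1 hx0, ENNReal.ofReal_one]

lemma probw_false (hq0 : 0 ≤ q) :
    ∀ l : Fin M, (ℙ : Measure Ω) {ω | G.w l ω = false} = ENNReal.ofReal (1 - q) := by
  intro l
  have hs : {ω | G.w l ω = false} = {ω | G.w l ω = true}ᶜ := by
    ext ω; simp
  rw [hs, measure_compl (measSetB (G.measw l) true) (measure_ne_top _ _), measure_univ,
    G.probw, ennreal_one_sub hq0]

lemma probd_false (hu1 : u ≤ 1) :
    ∀ (i' : Fin N) (l : Fin M),
      (ℙ : Measure Ω) {ω | G.d i' l ω = false} = ENNReal.ofReal u := by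
  intro i' l
  have hs : {ω | G.d i' l ω = false} = {ω | G.d i' l ω = true}ᶜ := by
    ext ω; simp
  rw [hs, measure_compl (measSetB (G.measd i' l) true) (measure_ne_top _ _), measure_univ,
    G.probd, ennreal_one_sub (by linarith)]
  norm_num

lemma probA (hu1 : u ≤ 1) (hp0 : 0 ≤ p) (l : Fin M) (i' : Fin N) :
    (ℙ : Measure Ω) (setA G l i') = ENNReal.ofReal (1 - (1 - u) * p) := by
  have hs : setA G l i' = ({ω | G.d i' l ω = true} ∩ {ω | G.X l i' ω = true})ᶜ := by
    ext ω
    simp only [setA, Set.mem_setOf_eq, Set.mem_compl_iff, Set.mem_inter_iff]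
    cases G.d i' l ω <;> cases G.X l i' ω <;> simp
  have hmeas : MeasurableSet ({ω | G.d i' l ω = true} ∩ {ω | G.X l i' ω = true}) :=
    (measSetB (G.measd i' l) true).inter (measSetB (G.measX l i') true)
  have hprod : (ℙ : Measure Ω) ({ω | G.d i' l ω = true} ∩ {ω | G.X l i' ω = true})
      = ENNReal.ofReal ((1 - u) * p) := by
    rw [L1 G (detd G l i' true) (detX G l i' true) (by simp), G.probd, G.probX,
      ENNReal.ofReal_mul (by linarith)]
  rw [hs, measure_compl hmeas (measure_ne_top _ _), measure_univ, hprod,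
    ennreal_one_sub (mul_nonneg (by linarith) hp0)]


lemma Yfalse (l : Fin M) (ω : Ω) :
    G.Y Sd l ω = false ↔
      ((∀ i' ∈ Sd, (G.d i' l ω && G.X l i' ω) = false) ∧ G.w l ω = false) := by
  rw [GTModel.Y, Bool.or_eq_false_iff]
  constructor
  · rintro ⟨hs, hw⟩
    exact ⟨fun i' hi' => (Finset.sup_eq_bot_iff _ _).mp hs i' hi', hw⟩
  · rintro ⟨hs, hw⟩
    exact ⟨(Finset.sup_eq_bot_iff _ _).mpr hs, hw⟩

lemma prob_nondef (hu0 : 0 ≤ u) (hu1 : u ≤ 1) (hp0 : 0 ≤ p) (hp1 : p ≤ 1)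
    (hq0 : 0 ≤ q) (hq1 : q ≤ 1) (l : Fin M) (j : Fin N) (hj : j ∉ Sd) :
    (ℙ : Measure Ω) {ω | G.X l j ω = true ∧ G.Y Sd l ω = false}
      = ENNReal.ofReal (p * ((1 - q) * (1 - (1 - u) * p) ^ Sd.card)) := by
  classical
  have hc0 : (0:ℝ) ≤ 1 - (1 - u) * p := by nlinarith
  set E0 : Set Ω := {ω | G.X l j ω = true} ∩ {ω | G.w l ω = false} with hE0def
  have hev : {ω | G.X l j ω = true ∧ G.Y Sd l ω = false} = E0 ∩ ⋂ i' ∈ Sd, setA G l i' := by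
    ext ω
    simp only [Set.mem_setOf_eq, Set.mem_inter_iff, Set.mem_iInter, hE0def, setA,
      Yfalse G Sd l ω]
    tauto
  have hdetE0 : Det G ({Sum.inl (l, j), Sum.inr (Sum.inr l)} : Finset (GTIdx M N)) E0 :=
    Det.inter G ((detX G l j true).mono G (by simp)) ((detw G l false).mono G (by simp))
  have hL2 := L2 G hdetE0 Sd (fun i' _ => detA G l i')
    (fun i' hi' => by
      have hne : i' ≠ j := fun h => hj (h ▸ hi')
      simp [blockA, Finset.disjoint_left, hne])
    (fun a ha b hb hab => by simp [blockA, Finset.disjoint_left, hab])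
  have hE0 : (ℙ : Measure Ω) E0 = ENNReal.ofReal p * ENNReal.ofReal (1 - q) := by
    rw [hE0def, L1 G (detX G l j true) (detw G l false) (by simp), G.probX, probw_false G hq0]
  rw [hev, hL2, hE0, Finset.prod_congr rfl (fun i' _ => probA G hu1 hp0 l i'),
    Finset.prod_const]
  rw [ENNReal.ofReal_mul hp0, ENNReal.ofReal_mul (by linarith : (0:ℝ) ≤ 1 - q),
    ENNReal.ofReal_pow hc0]
  ring

lemma prob_def (hu0 : 0 ≤ u) (hu1 : u ≤ 1) (hp0 : 0 ≤ p) (hp1 : p ≤ 1)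
    (hq0 : 0 ≤ q) (hq1 : q ≤ 1) (l : Fin M) (i : Fin N) (hi : i ∈ Sd) :
    (ℙ : Measure Ω) {ω | G.X l i ω = true ∧ G.Y Sd l ω = false}
      = ENNReal.ofReal (p * (u * ((1 - q) * (1 - (1 - u) * p) ^ (Sd.card - 1)))) := by
  classical
  have hc0 : (0:ℝ) ≤ 1 - (1 - u) * p := by nlinarith
  set E0 : Set Ω := {ω | G.X l i ω = true} ∩ ({ω | G.d i l ω = false} ∩ {ω | G.w l ω = false})
    with hE0def
  have hev : {ω | G.X l i ω = true ∧ G.Y Sd l ω = false}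
      = E0 ∩ ⋂ i' ∈ Sd.erase i, setA G l i' := by
    ext ω
    simp only [Set.mem_setOf_eq, Set.mem_inter_iff, Set.mem_iInter, hE0def, setA,
      Yfalse G Sd l ω, Finset.mem_erase]
    constructor
    · rintro ⟨hx, hall, hw⟩
      have hd := hall i hi
      rw [hx, Bool.and_true] at hd
      exact ⟨⟨hx, hd, hw⟩, fun i' h => hall i' h.2⟩
    · rintro ⟨⟨hx, hd, hw⟩, hall⟩
      refine ⟨hx, fun i' hi' => ?_, hw⟩
      by_cases h : i' = i
      · subst h; simp [hd]
      · exact hall i' ⟨h, hi'⟩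
  have hdetE0 : Det G ({Sum.inl (l, i), Sum.inr (Sum.inl (i, l)), Sum.inr (Sum.inr l)} :
      Finset (GTIdx M N)) E0 :=
    Det.inter G ((detX G l i true).mono G (by simp))
      (Det.inter G ((detd G l i false).mono G (by simp)) ((detw G l false).mono G (by simp)))
  have hL2 := L2 G hdetE0 (Sd.erase i) (fun i' _ => detA G l i')
    (fun i' hi' => by
      have hne : i' ≠ i := (Finset.mem_erase.1 hi').1
      simp [blockA, Finset.disjoint_left, hne])
    (fun a ha b hb hab => by simp [blockA, Finset.disjoint_left, hab])
  have hE0 : (ℙ : Measure Ω) E0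
      = ENNReal.ofReal p * (ENNReal.ofReal u * ENNReal.ofReal (1 - q)) := by
    have hinner : (ℙ : Measure Ω) ({ω | G.d i l ω = false} ∩ {ω | G.w l ω = false})
        = ENNReal.ofReal u * ENNReal.ofReal (1 - q) := by
      rw [L1 G (detd G l i false) (detw G l false) (by simp), probd_false G hu1,
        probw_false G hq0]
    have hdet2 : Det G ({Sum.inr (Sum.inl (i, l)), Sum.inr (Sum.inr l)} : Finset (GTIdx M N))
        ({ω | G.d i l ω = false} ∩ {ω | G.w l ω = false}) :=
      Det.inter G ((detd G l i false).mono G (by simp)) ((detw G l false).mono G (by simp))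
    rw [hE0def, L1 G (detX G l i true) hdet2 (by simp), G.probX, hinner]
  rw [hev, hL2, hE0, Finset.prod_congr rfl (fun i' _ => probA G hu1 hp0 l i'),
    Finset.prod_const, Finset.card_erase_of_mem hi]
  rw [ENNReal.ofReal_mul hp0, ENNReal.ofReal_mul hu0,
    ENNReal.ofReal_mul (by linarith : (0:ℝ) ≤ 1 - q), ENNReal.ofReal_pow hc0]
  ring


noncomputable def Zfun (l : Fin M) (i : Fin N) (ψ : ℝ) : Ω → ℝ := fun ω =>
  (if G.X l i ω then (1:ℝ) else 0) * (if G.Y Sd l ω then 0 else 1)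
    - ψ * ((if G.X l i ω then (1:ℝ) else 0) * (if G.Y Sd l ω then 1 else 0))

lemma T_eq_sum (i : Fin N) (ψ : ℝ) :
    G.T Sd ψ i = ∑ l : Fin M, Zfun G Sd l i ψ := by
  funext ω
  simp only [GTModel.T, Zfun, Finset.sum_apply, Finset.mul_sum, Finset.sum_sub_distrib]

def blockL (l : Fin M) : Finset (GTIdx M N) :=
  (Finset.univ.image fun i' : Fin N => Sum.inl (l, i')) ∪
  ((Finset.univ.image fun i' : Fin N => Sum.inr (Sum.inl (i', l))) ∪ {Sum.inr (Sum.inr l)})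

def tupleL (l : Fin M) : Ω → (↥(blockL (M := M) (N := N) l) → Bool) := fun ω t => Fam G t ω

lemma meas_tupleL (l : Fin M) : Measurable (tupleL G l) :=
  measurable_pi_lambda _ fun t => measFam G t

noncomputable def phiY (l : Fin M) : (↥(blockL (M := M) (N := N) l) → Bool) → Bool := fun g =>
  (Sd.sup fun i' => g ⟨Sum.inr (Sum.inl (i', l)), by simp [blockL]⟩ &&
      g ⟨Sum.inl (l, i'), by simp [blockL]⟩) || g ⟨Sum.inr (Sum.inr l), by simp [blockL]⟩

noncomputable def phiZ (l : Fin M) (i : Fin N) (ψ : ℝ) : (↥(blockL (M := M) (N := N) l) → Bool) → ℝ :=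
  fun g =>
    (if g ⟨Sum.inl (l, i), by simp [blockL]⟩ then (1:ℝ) else 0)
        * (if phiY Sd l g then 0 else 1)
      - ψ * ((if g ⟨Sum.inl (l, i), by simp [blockL]⟩ then (1:ℝ) else 0)
        * (if phiY Sd l g then 1 else 0))

lemma Ycomp (l : Fin M) : G.Y Sd l = phiY Sd l ∘ tupleL G l := rfl

lemma Zcomp (l : Fin M) (i : Fin N) (ψ : ℝ) :
    Zfun G Sd l i ψ = phiZ Sd l i ψ ∘ tupleL G l := rfl

lemma meas_Y (l : Fin M) : Measurable (G.Y Sd l) := by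
  rw [Ycomp G Sd l]
  exact (measurable_of_countable _).comp (meas_tupleL G l)

lemma meas_Z (l : Fin M) (i : Fin N) (ψ : ℝ) : Measurable (Zfun G Sd l i ψ) := by
  rw [Zcomp G Sd l i ψ]
  exact (measurable_of_countable _).comp (meas_tupleL G l)

def testOf : GTIdx M N → Fin M := Sum.elim Prod.fst (Sum.elim Prod.snd id)

lemma mem_blockL (t : GTIdx M N) (l : Fin M) :
    t ∈ blockL (M := M) (N := N) l ↔ testOf t = l := by
  rcases t with (⟨a, b⟩ | ⟨⟨a, b⟩ | a⟩) <;> simp [blockL, testOf, eq_comm] <;> aesop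

lemma blockL_disjoint {l l' : Fin M} (h : l ≠ l') :
    Disjoint (blockL (M := M) (N := N) l) (blockL (M := M) (N := N) l') := by
  rw [Finset.disjoint_left]
  intro t ht ht'
  rw [mem_blockL] at ht ht'
  exact h (ht.symm.trans ht')

lemma indep_Z {l l' : Fin M} (h : l ≠ l') (i : Fin N) (ψ : ℝ) :
    IndepFun (Zfun G Sd l i ψ) (Zfun G Sd l' i ψ) (ℙ : Measure Ω) := by
  rw [Zcomp G Sd l i ψ, Zcomp G Sd l' i ψ]
  exact (G.indep.indepFun_finset (blockL l) (blockL l') (blockL_disjoint h)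
    (measFam G)).comp (measurable_of_countable _) (measurable_of_countable _)

lemma memLp_Z (l : Fin M) (i : Fin N) (ψ : ℝ) : MemLp (Zfun G Sd l i ψ) 2 (ℙ : Measure Ω) := by
  refine MemLp.of_bound (meas_Z G Sd l i ψ).aestronglyMeasurable (1 + |ψ|) ?_
  filter_upwards with ω
  rw [Real.norm_eq_abs]
  have h1 : |ψ| ≤ 1 + |ψ| := by linarith [abs_nonneg ψ]
  cases hx : G.X l i ω <;> cases hy : G.Y Sd l ω <;>
    simp [Zfun, hx, hy, abs_nonneg, h1] <;>
    linarith [abs_nonneg ψ]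


lemma varZ (hp0 : 0 ≤ p) (l : Fin M) (i : Fin N) (ψ : ℝ) (r : ℝ) (hr0 : 0 ≤ r)
    (hr : (ℙ : Measure Ω) {ω | G.X l i ω = true ∧ G.Y Sd l ω = false} = ENNReal.ofReal r) :
    variance (Zfun G Sd l i ψ) (ℙ : Measure Ω) ≤ r + ψ ^ 2 * (p - r) := by
  classical
  set A : Set Ω := {ω | G.X l i ω = true} ∩ {ω | G.Y Sd l ω = false} with hAdef
  set B : Set Ω := {ω | G.X l i ω = true} ∩ {ω | G.Y Sd l ω = true} with hBdef
  have hAm : MeasurableSet A :=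
    (measSetB (G.measX l i) true).inter (measSetB (meas_Y G Sd l) false)
  have hBm : MeasurableSet B :=
    (measSetB (G.measX l i) true).inter (measSetB (meas_Y G Sd l) true)
  have hArw : (ℙ : Measure Ω) A = ENNReal.ofReal r := by
    rw [hAdef, ← Set.setOf_and]
    exact hr
  have hdisj : Disjoint A B := by
    rw [Set.disjoint_left]
    rintro ω ⟨hx, hy⟩ ⟨hx', hy'⟩
    rw [Set.mem_setOf_eq] at hy hy'
    rw [hy] at hy'
    exact Bool.false_ne_true hy'
  have hunion : A ∪ B = {ω | G.X l i ω = true} := by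
    ext ω
    cases hy : G.Y Sd l ω <;> simp [hAdef, hBdef, hy]
  have hPB : ((ℙ : Measure Ω) B).toReal = p - r := by
    have hsum : (ℙ : Measure Ω) A + ℙ B = ENNReal.ofReal p := by
      rw [← measure_union hdisj hBm, hunion, G.probX]
    have h2 := congrArg ENNReal.toReal hsum
    rw [ENNReal.toReal_add (measure_ne_top _ _) (measure_ne_top _ _), hArw,
      ENNReal.toReal_ofReal hr0, ENNReal.toReal_ofReal hp0] at h2
    linarith
  have hsq : (Zfun G Sd l i ψ) ^ 2
      = fun ω => A.indicator (fun _ => (1:ℝ)) ω + B.indicator (fun _ => ψ ^ 2) ω := by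
    funext ω
    simp only [Pi.pow_apply]
    cases hx : G.X l i ω <;> cases hy : G.Y Sd l ω <;>
      simp [Zfun, Set.indicator_apply, hAdef, hBdef, hx, hy] <;> ring
  have hint : (∫ ω, ((Zfun G Sd l i ψ) ^ 2) ω ∂(ℙ : Measure Ω)) = r + ψ ^ 2 * (p - r) := by
    rw [hsq]
    rw [integral_add ((integrable_const (1:ℝ)).indicator hAm)
      ((integrable_const (ψ ^ 2)).indicator hBm)]
    rw [integral_indicator_const _ hAm, integral_indicator_const _ hBm, measureReal_def, measureReal_def, hArw,
      ENNReal.toReal_ofReal hr0, hPB]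
    simp [mul_comm]
  have hvar := variance_le_expectation_sq (μ := (ℙ : Measure Ω))
    (meas_Z G Sd l i ψ).aestronglyMeasurable
  rw [hint] at hvar
  exact hvar

end Aux


/-- With the column statistic `T(·)` built with constant `ψ ≥ 0`, for every
non-defective `j ∉ S_d`, `Var(T(j)) ≤ M·p·(Γ + ψ²(1−Γ))`, and for every defective
`i ∈ S_d`, `Var(T(i)) ≤ M·p·(γ0Γ + ψ²(1−γ0Γ))`. -/
theorem stmt_5 {Ω : Type} [MeasureSpace Ω] [IsProbabilityMeasure (ℙ : Measure Ω)]
    (M N K : ℕ) (hN : 2 ≤ N) (hK1 : 1 ≤ K) (hKN : K < N) (hM : 1 ≤ M)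
    (p u q : ℝ) (hp : 0 < p) (hp1 : p < 1) (hu0 : 0 ≤ u) (hu1 : u < 1)
    (hq0 : 0 ≤ q) (hq1 : q < 1)
    (Sd : Finset (Fin N)) (hSd : Sd.card = K)
    (G : GTModel Ω M N p u q) (ψ : ℝ) (hψ : 0 ≤ ψ) :
    (∀ j : Fin N, j ∉ Sd →
      ProbabilityTheory.variance (G.T Sd ψ j) (ℙ : Measure Ω)
        ≤ M * p * ((1 - q) * (1 - (1 - u) * p) ^ K
            + ψ ^ 2 * (1 - (1 - q) * (1 - (1 - u) * p) ^ K)))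
    ∧ (∀ i : Fin N, i ∈ Sd →
      ProbabilityTheory.variance (G.T Sd ψ i) (ℙ : Measure Ω)
        ≤ M * p * ((u / (1 - (1 - u) * p)) * ((1 - q) * (1 - (1 - u) * p) ^ K)
            + ψ ^ 2 * (1 - (u / (1 - (1 - u) * p)) * ((1 - q) * (1 - (1 - u) * p) ^ K)))) := by
  classical
  have hc0 : (0:ℝ) ≤ 1 - (1 - u) * p := by nlinarith
  have hcpos : (0:ℝ) < 1 - (1 - u) * p := by nlinarith
  constructor
  · intro j hj
    set r : ℝ := p * ((1 - q) * (1 - (1 - u) * p) ^ K) with hrdef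
    have hr0 : 0 ≤ r :=
      mul_nonneg hp.le (mul_nonneg (by linarith) (pow_nonneg hc0 K))
    have hprob : ∀ l : Fin M,
        (ℙ : Measure Ω) {ω | G.X l j ω = true ∧ G.Y Sd l ω = false} = ENNReal.ofReal r := by
      intro l
      have h := prob_nondef G Sd hu0 hu1.le hp.le hp1.le hq0 hq1.le l j hj
      rw [hSd] at h
      exact h
    have hvar : ∀ l : Fin M,
        variance (Zfun G Sd l j ψ) (ℙ : Measure Ω) ≤ r + ψ ^ 2 * (p - r) :=
      fun l => varZ G Sd hp.le l j ψ r hr0 (hprob l)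
    rw [T_eq_sum G Sd j ψ,
      IndepFun.variance_sum (fun l _ => memLp_Z G Sd l j ψ)
        (fun l _ l' hl' hne => indep_Z G Sd hne j ψ)]
    refine le_trans (Finset.sum_le_sum fun l _ => hvar l) ?_
    rw [Finset.sum_const, Finset.card_univ, Fintype.card_fin, nsmul_eq_mul]
    apply le_of_eq
    rw [hrdef]
    ring
  · intro i hi
    set r : ℝ := p * (u * ((1 - q) * (1 - (1 - u) * p) ^ (K - 1))) with hrdef
    have hr0 : 0 ≤ r :=
      mul_nonneg hp.le (mul_nonneg hu0 (mul_nonneg (by linarith) (pow_nonneg hc0 _)))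
    have hprob : ∀ l : Fin M,
        (ℙ : Measure Ω) {ω | G.X l i ω = true ∧ G.Y Sd l ω = false} = ENNReal.ofReal r := by
      intro l
      have h := prob_def G Sd hu0 hu1.le hp.le hp1.le hq0 hq1.le l i hi
      rw [hSd] at h
      exact h
    have hvar : ∀ l : Fin M,
        variance (Zfun G Sd l i ψ) (ℙ : Measure Ω) ≤ r + ψ ^ 2 * (p - r) :=
      fun l => varZ G Sd hp.le l i ψ r hr0 (hprob l)
    rw [T_eq_sum G Sd i ψ,
      IndepFun.variance_sum (fun l _ => memLp_Z G Sd l i ψ)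
        (fun l _ l' hl' hne => indep_Z G Sd hne i ψ)]
    refine le_trans (Finset.sum_le_sum fun l _ => hvar l) ?_
    rw [Finset.sum_const, Finset.card_univ, Fintype.card_fin, nsmul_eq_mul]
    apply le_of_eq
    have hgam : u * ((1 - q) * (1 - (1 - u) * p) ^ (K - 1))
        = (u / (1 - (1 - u) * p)) * ((1 - q) * (1 - (1 - u) * p) ^ K) := by
      have hKK : K - 1 + 1 = K := Nat.succ_pred_eq_of_pos hK1
      rw [← hKK, pow_succ]
      field_simp
      simp only [Nat.add_sub_cancel, Nat.add_sub_cancel_left]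
    rw [hrdef, hgam]
    ring
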